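/- Let m ≥ 1, let c ∈ (0,1], and let p : Fin m → ℝ satisfy c ≤ p i ≤ 1 for all i. Define M = Σ_{A ⊆ Fin m} w_p(A) • (W(A) * W(A)), the sum ranging over all finite subsets A of Fin m. Then for every v : Fin m → ℝ with Σ_i v i = 0, the quadratic form satisfies Σ_{i,j} v i · M_{ij} · v j ≤ (1 - c⁴·(1 - (1 - c)^m)²/8) · Σ_i (v i)². -/

import Mathlib

open Finset

/-- Ergodicity lemma (Lemma 3): the second largest eigenvalue of
`M = E[W²]` satisfies `ρ ≤ 1 - c⁴(1-(1-c)^m)²/8`, expressed via the quadratic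
form of `M` on mean-zero vectors. -/
theorem expected_gossip_square_spectral_gap
    (m : ℕ) (hm : 1 ≤ m) (c : ℝ) (hc0 : 0 < c) (hc1 : c ≤ 1)
    (p : Fin m → ℝ) (hp : ∀ i, c ≤ p i ∧ p i ≤ 1)
    (W : Finset (Fin m) → Matrix (Fin m) (Fin m) ℝ)
    (hW : ∀ A i j, W A i j =
      if i ∈ A ∧ j ∈ A then 1 / (A.card : ℝ)
      else if i = j then 1 else 0)
    (M : Matrix (Fin m) (Fin m) ℝ)
    (hM : M = ∑ A : Finset (Fin m),
      ((∏ i ∈ A, p i) * ∏ i ∈ Aᶜ, (1 - p i)) • (W A * W A))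
    (v : Fin m → ℝ) (hv : ∑ i, v i = 0) :
    ∑ i, ∑ j, v i * M i j * v j ≤
      (1 - c ^ 4 * (1 - (1 - c) ^ m) ^ 2 / 8) * ∑ i, v i ^ 2 := by
  classical
  -- abbreviation for the weight
  have hwnn : ∀ A : Finset (Fin m), 0 ≤ (∏ i ∈ A, p i) * ∏ i ∈ Aᶜ, (1 - p i) := by
    intro A
    apply mul_nonneg
    · exact Finset.prod_nonneg fun i _ => le_of_lt (lt_of_lt_of_le hc0 (hp i).1)
    · exact Finset.prod_nonneg fun i _ => by linarith [(hp i).2]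
  -- W A is idempotent
  have hidem : ∀ A : Finset (Fin m), W A * W A = W A := by
    intro A
    ext i j
    rw [Matrix.mul_apply]
    by_cases hi : i ∈ A
    · have hcard : 0 < A.card := card_pos.2 ⟨i, hi⟩
      by_cases hj : j ∈ A
      · have hterm : ∀ k, W A i k * W A k j = if k ∈ A then (1 / (A.card:ℝ))^2 else 0 := by
          intro k
          by_cases hk : k ∈ A
          · simp [hW, hi, hj, hk]; ring
          · have h1 : ¬(i = k) := fun h => hk (h ▸ hi)
            have h2 : ¬(k = j) := fun h => hk (h ▸ hj)
            simp [hW, hk, h1, h2]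
        simp_rw [hterm]
        rw [Finset.sum_ite_mem, Finset.univ_inter, Finset.sum_const, hW]
        simp [hi, hj]
        field_simp
      · have hterm : ∀ k, W A i k * W A k j = 0 := by
          intro k
          by_cases hk : k ∈ A
          · have h2 : ¬(k = j) := fun h => hj (h ▸ hk)
            simp [hW, hk, hj, h2]
          · have h1 : ¬(i = k) := fun h => hk (h ▸ hi)
            simp [hW, hk, h1]
        simp_rw [hterm]
        have : ¬(i = j) := fun h => hj (h ▸ hi)
        simp [hW, hj, this]
    · have hterm : ∀ k, W A i k * W A k j = if i = k then W A k j else 0 := by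
        intro k
        by_cases h : i = k
        · subst h; simp [hW A i, hi]
        · simp [hW A i, hi, h]
      simp_rw [hterm]
      rw [Finset.sum_ite_eq]
      simp
  -- quadratic form of W A
  have hquad : ∀ A : Finset (Fin m), ∑ i, ∑ j, v i * W A i j * v j
      = (∑ k ∈ Aᶜ, v k ^ 2) + (∑ i ∈ A, v i) ^ 2 / (A.card : ℝ) := by
    intro A
    have hin : ∀ i ∈ A, ∑ j, v i * W A i j * v j = v i * (∑ j ∈ A, v j) / (A.card : ℝ) := by
      intro i hi
      have hterm : ∀ j, v i * W A i j * v j = if j ∈ A then v i * v j / (A.card : ℝ) else 0 := by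
        intro j
        by_cases hj : j ∈ A
        · simp [hW, hi, hj]; ring
        · have h1 : ¬(i = j) := fun h => hj (h ▸ hi)
          simp [hW, hj, h1]
      simp_rw [hterm]
      rw [Finset.sum_ite_mem, Finset.univ_inter]
      rw [Finset.mul_sum, Finset.sum_div]
    have hout : ∀ i ∈ Aᶜ, ∑ j, v i * W A i j * v j = v i ^ 2 := by
      intro i hi
      rw [Finset.mem_compl] at hi
      have hterm : ∀ j, v i * W A i j * v j = if i = j then v i * v j else 0 := by
        intro j
        by_cases h : i = j
        · subst h; simp [hW, hi]
        · simp [hW, hi, h]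
      simp_rw [hterm]
      rw [Finset.sum_ite_eq]
      simp [sq]
    rw [← Finset.sum_add_sum_compl A]
    rw [Finset.sum_congr rfl hin, Finset.sum_congr rfl hout]
    rw [add_comm]
    congr 1
    rw [← Finset.sum_div, ← Finset.sum_mul, sq]
  -- total mass
  have hmass : ∑ A : Finset (Fin m), (∏ i ∈ A, p i) * ∏ i ∈ Aᶜ, (1 - p i) = 1 := by
    have h := Finset.prod_add p (fun i => 1 - p i) (univ : Finset (Fin m))
    simp only [add_sub_cancel, Finset.prod_const_one, Finset.powerset_univ] at h
    have h' : ∑ A : Finset (Fin m), (∏ i ∈ A, p i) * ∏ i ∈ Aᶜ, (1 - p i)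
        = ∑ A : Finset (Fin m), (∏ i ∈ A, p i) * ∏ i ∈ univ \ A, (1 - p i) := by
      simp [Finset.compl_eq_univ_sdiff]
    rw [h', ← h]
  -- pair marginal
  have hpair : ∀ i j : Fin m, i ≠ j →
      ∑ A : Finset (Fin m), (if i ∈ A ∧ j ∈ A then (∏ k ∈ A, p k) * ∏ k ∈ Aᶜ, (1 - p k) else 0)
        = p i * p j := by
    intro i j hij
    rw [← Finset.sum_filter]
    have hbij : ∑ A ∈ Finset.univ.filter (fun A : Finset (Fin m) => i ∈ A ∧ j ∈ A),
        (∏ k ∈ A, p k) * ∏ k ∈ Aᶜ, (1 - p k)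
        = ∑ B ∈ (({i, j} : Finset (Fin m))ᶜ).powerset,
            p i * p j * ((∏ k ∈ B, p k) * ∏ k ∈ ({i,j}ᶜ : Finset (Fin m)) \ B, (1 - p k)) := by
      apply Finset.sum_nbij' (fun A => A \ {i, j}) (fun B => B ∪ {i, j})
      · intro A hA
        simp only [Finset.mem_filter, Finset.mem_univ, true_and] at hA
        rw [Finset.mem_powerset]
        intro x hx
        rw [Finset.mem_sdiff] at hx
        rw [Finset.mem_compl]
        exact hx.2
      · intro B _; simp
      · intro A hA
        simp only [Finset.mem_filter, Finset.mem_univ, true_and] at hA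
        rw [Finset.sdiff_union_self_eq_union]
        rw [Finset.union_eq_left]
        intro x hx
        rcases Finset.mem_insert.1 hx with h | h
        · exact h ▸ hA.1
        · exact (Finset.mem_singleton.1 h) ▸ hA.2
      · intro B hB
        rw [Finset.mem_powerset] at hB
        rw [Finset.union_sdiff_right]
        apply Finset.sdiff_eq_self_of_disjoint
        exact Finset.disjoint_left.2 fun x hx => Finset.mem_compl.1 (hB hx)
      · intro A hA
        simp only [Finset.mem_filter, Finset.mem_univ, true_and] at hA
        have hsub : {i, j} ⊆ A := by
          intro x hx
          rcases Finset.mem_insert.1 hx with h | h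
          · exact h ▸ hA.1
          · exact (Finset.mem_singleton.1 h) ▸ hA.2
        have h1 : ∏ k ∈ A, p k = (p i * p j) * ∏ k ∈ A \ {i, j}, p k := by
          rw [← Finset.prod_sdiff hsub]
          have : ∏ k ∈ ({i, j} : Finset (Fin m)), p k = p i * p j := by
            rw [Finset.prod_insert (by simp [hij]), Finset.prod_singleton]
          rw [this]; ring
        have h2 : Aᶜ = ({i,j}ᶜ : Finset (Fin m)) \ (A \ {i, j}) := by
          ext x
          simp only [Finset.mem_compl, Finset.mem_sdiff, Finset.mem_insert, Finset.mem_singleton]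
          constructor
          · intro hx
            refine ⟨fun h => ?_, fun h => hx h.1⟩
            rcases h with h | h
            · exact hx (h ▸ hA.1)
            · exact hx (h ▸ hA.2)
          · intro ⟨h1', h2'⟩ hxA
            exact absurd ⟨hxA, fun h => h1' h⟩ h2'
        rw [h1, h2]; ring
    rw [hbij, ← Finset.mul_sum]
    have h := Finset.prod_add p (fun i => 1 - p i) (({i,j}ᶜ : Finset (Fin m)))
    simp only [add_sub_cancel, Finset.prod_const_one] at h
    rw [← h, mul_one]
  -- expansion of the pairwise square sum
  have hexp : ∀ A : Finset (Fin m), ∑ i ∈ A, ∑ j ∈ A, (v i - v j) ^ 2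
      = 2 * A.card * (∑ k ∈ A, v k ^ 2) - 2 * (∑ k ∈ A, v k) ^ 2 := by
    intro A
    have h1 : ∀ i ∈ A, ∑ j ∈ A, (v i - v j) ^ 2
        = (A.card : ℝ) * v i ^ 2 - 2 * v i * (∑ k ∈ A, v k) + ∑ k ∈ A, v k ^ 2 := by
      intro i _
      rw [Finset.sum_congr rfl (fun j _ => by ring :
        ∀ j ∈ A, (v i - v j) ^ 2 = v i ^ 2 - 2 * v i * v j + v j ^ 2)]
      rw [Finset.sum_add_distrib, Finset.sum_sub_distrib, Finset.sum_const, ← Finset.mul_sum]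
      ring
    rw [Finset.sum_congr rfl h1, Finset.sum_add_distrib, Finset.sum_sub_distrib,
      ← Finset.mul_sum, ← Finset.sum_mul, Finset.sum_const, ← Finset.mul_sum]
    ring
  -- deviation lower bound
  have hdev : ∀ A : Finset (Fin m),
      (1 / (2 * m : ℝ)) * ∑ i ∈ A, ∑ j ∈ A, (v i - v j) ^ 2
      ≤ (∑ k ∈ A, v k ^ 2) - (∑ k ∈ A, v k) ^ 2 / (A.card : ℝ) := by
    intro A
    rcases Finset.eq_empty_or_nonempty A with rfl | hA
    · simp
    · have hcard : 0 < (A.card : ℝ) := by exact_mod_cast Finset.card_pos.2 hA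
      have hle : (A.card : ℝ) ≤ m := by
        exact_mod_cast (Finset.card_le_univ A).trans_eq (by simp)
      have hnn : (0:ℝ) ≤ ∑ i ∈ A, ∑ j ∈ A, (v i - v j) ^ 2 :=
        Finset.sum_nonneg fun i _ => Finset.sum_nonneg fun j _ => sq_nonneg _
      have heq : (∑ k ∈ A, v k ^ 2) - (∑ k ∈ A, v k) ^ 2 / (A.card : ℝ)
          = (1 / (2 * A.card : ℝ)) * ∑ i ∈ A, ∑ j ∈ A, (v i - v j) ^ 2 := by
        rw [hexp]
        field_simp
      rw [heq]
      apply mul_le_mul_of_nonneg_right _ hnn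
      apply one_div_le_one_div_of_le (by positivity)
      have hm' : (1:ℝ) ≤ m := by exact_mod_cast hm
      nlinarith
  -- the key identity for the quadratic form of M
  have key : ∑ i, ∑ j, v i * M i j * v j
      = ∑ A : Finset (Fin m), ((∏ k ∈ A, p k) * ∏ k ∈ Aᶜ, (1 - p k)) *
          ((∑ k ∈ Aᶜ, v k ^ 2) + (∑ k ∈ A, v k) ^ 2 / (A.card : ℝ)) := by
    subst hM
    simp only [Matrix.sum_apply, Matrix.smul_apply, smul_eq_mul]
    have h1 : ∀ i j : Fin m, v i * (∑ A : Finset (Fin m),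
        ((∏ k ∈ A, p k) * ∏ k ∈ Aᶜ, (1 - p k)) * (W A * W A) i j) * v j
        = ∑ A : Finset (Fin m),
            ((∏ k ∈ A, p k) * ∏ k ∈ Aᶜ, (1 - p k)) * (v i * W A i j * v j) := by
      intro i j
      rw [Finset.mul_sum, Finset.sum_mul]
      apply Finset.sum_congr rfl
      intro A _
      rw [hidem A]
      ring
    simp_rw [h1]
    rw [Finset.sum_congr rfl (fun i _ => Finset.sum_comm), Finset.sum_comm]
    apply Finset.sum_congr rfl
    intro A _
    rw [← hquad A, Finset.mul_sum]
    apply Finset.sum_congr rfl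
    intro i _
    rw [Finset.mul_sum]
  -- swap lemma
  have hswap : ∑ A : Finset (Fin m), ((∏ k ∈ A, p k) * ∏ k ∈ Aᶜ, (1 - p k)) *
        ∑ i ∈ A, ∑ j ∈ A, (v i - v j) ^ 2
      = ∑ i, ∑ j, (∑ A : Finset (Fin m),
          if i ∈ A ∧ j ∈ A then (∏ k ∈ A, p k) * ∏ k ∈ Aᶜ, (1 - p k) else 0)
          * (v i - v j) ^ 2 := by
    have h1 : ∀ A : Finset (Fin m), ((∏ k ∈ A, p k) * ∏ k ∈ Aᶜ, (1 - p k)) *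
          ∑ i ∈ A, ∑ j ∈ A, (v i - v j) ^ 2
        = ∑ i, ∑ j, (if i ∈ A ∧ j ∈ A then (∏ k ∈ A, p k) * ∏ k ∈ Aᶜ, (1 - p k) else 0)
            * (v i - v j) ^ 2 := by
      intro A
      have hrow : ∀ i : Fin m, ∑ j, (if i ∈ A ∧ j ∈ A then
            (∏ k ∈ A, p k) * ∏ k ∈ Aᶜ, (1 - p k) else 0) * (v i - v j) ^ 2
          = if i ∈ A then ∑ j ∈ A, ((∏ k ∈ A, p k) * ∏ k ∈ Aᶜ, (1 - p k)) * (v i - v j) ^ 2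
            else 0 := by
        intro i
        by_cases hi : i ∈ A
        · simp only [hi, true_and, if_true, ite_mul, zero_mul]
          rw [Finset.sum_ite_mem, Finset.univ_inter]
        · simp [hi]
      simp_rw [hrow]
      rw [Finset.sum_ite_mem, Finset.univ_inter, Finset.mul_sum]
      apply Finset.sum_congr rfl
      intro i _
      rw [Finset.mul_sum]
    simp_rw [h1]
    rw [Finset.sum_comm]
    apply Finset.sum_congr rfl
    intro i _
    rw [Finset.sum_comm]
    apply Finset.sum_congr rfl
    intro j _
    rw [Finset.sum_mul]
  -- global pairwise sum
  have hglob : ∑ i, ∑ j, (v i - v j) ^ 2 = 2 * m * ∑ k, v k ^ 2 := by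
    have := hexp univ
    simp only [Finset.card_univ, Fintype.card_fin] at this
    rw [this, hv]
    ring
  set T : ℝ := ∑ k, v k ^ 2 with hT
  have hTnn : 0 ≤ T := Finset.sum_nonneg fun k _ => sq_nonneg _
  -- lower bound on the dissipation
  have hdiss : c ^ 2 * T ≤ ∑ A : Finset (Fin m),
      ((∏ k ∈ A, p k) * ∏ k ∈ Aᶜ, (1 - p k)) *
        ((∑ k ∈ A, v k ^ 2) - (∑ k ∈ A, v k) ^ 2 / (A.card : ℝ)) := by
    have step1 : ∑ A : Finset (Fin m),
        ((∏ k ∈ A, p k) * ∏ k ∈ Aᶜ, (1 - p k)) *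
          ((1 / (2 * m : ℝ)) * ∑ i ∈ A, ∑ j ∈ A, (v i - v j) ^ 2)
        ≤ ∑ A : Finset (Fin m),
        ((∏ k ∈ A, p k) * ∏ k ∈ Aᶜ, (1 - p k)) *
          ((∑ k ∈ A, v k ^ 2) - (∑ k ∈ A, v k) ^ 2 / (A.card : ℝ)) := by
      apply Finset.sum_le_sum
      intro A _
      exact mul_le_mul_of_nonneg_left (hdev A) (hwnn A)
    refine le_trans ?_ step1
    have step2 : ∑ A : Finset (Fin m),
        ((∏ k ∈ A, p k) * ∏ k ∈ Aᶜ, (1 - p k)) *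
          ((1 / (2 * m : ℝ)) * ∑ i ∈ A, ∑ j ∈ A, (v i - v j) ^ 2)
        = (1 / (2 * m : ℝ)) * ∑ i, ∑ j, (∑ A : Finset (Fin m),
            if i ∈ A ∧ j ∈ A then (∏ k ∈ A, p k) * ∏ k ∈ Aᶜ, (1 - p k) else 0)
            * (v i - v j) ^ 2 := by
      rw [← hswap, Finset.mul_sum]
      apply Finset.sum_congr rfl
      intro A _
      ring
    rw [step2]
    have step3 : ∑ i, ∑ j, (c ^ 2) * (v i - v j) ^ 2
        ≤ ∑ i, ∑ j, (∑ A : Finset (Fin m),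
            if i ∈ A ∧ j ∈ A then (∏ k ∈ A, p k) * ∏ k ∈ Aᶜ, (1 - p k) else 0)
            * (v i - v j) ^ 2 := by
      apply Finset.sum_le_sum
      intro i _
      apply Finset.sum_le_sum
      intro j _
      by_cases hij : i = j
      · subst hij; simp
      · rw [hpair i j hij]
        apply mul_le_mul_of_nonneg_right _ (sq_nonneg _)
        have h1 := (hp i).1
        have h2 := (hp j).1
        have := mul_le_mul h1 h2 (le_of_lt hc0) (le_of_lt (lt_of_lt_of_le hc0 h1))
        calc c ^ 2 = c * c := sq c
        _ ≤ p i * p j := this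
    have hm' : (1:ℝ) ≤ m := by exact_mod_cast hm
    have step4 : (1 / (2 * m : ℝ)) * ∑ i, ∑ j, (c ^ 2) * (v i - v j) ^ 2 = c ^ 2 * T := by
      simp_rw [← Finset.mul_sum]
      rw [hglob]
      field_simp
    calc c ^ 2 * T = (1 / (2 * m : ℝ)) * ∑ i, ∑ j, (c ^ 2) * (v i - v j) ^ 2 := step4.symm
    _ ≤ _ := by
        apply mul_le_mul_of_nonneg_left step3
        positivity
  -- rewrite key as T minus dissipation
  have key2 : ∑ i, ∑ j, v i * M i j * v j
      = T - ∑ A : Finset (Fin m),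
          ((∏ k ∈ A, p k) * ∏ k ∈ Aᶜ, (1 - p k)) *
            ((∑ k ∈ A, v k ^ 2) - (∑ k ∈ A, v k) ^ 2 / (A.card : ℝ)) := by
    rw [key]
    have hAc : ∀ A : Finset (Fin m),
        ((∏ k ∈ A, p k) * ∏ k ∈ Aᶜ, (1 - p k)) *
          ((∑ k ∈ Aᶜ, v k ^ 2) + (∑ k ∈ A, v k) ^ 2 / (A.card : ℝ))
        = ((∏ k ∈ A, p k) * ∏ k ∈ Aᶜ, (1 - p k)) * T
          - ((∏ k ∈ A, p k) * ∏ k ∈ Aᶜ, (1 - p k)) *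
            ((∑ k ∈ A, v k ^ 2) - (∑ k ∈ A, v k) ^ 2 / (A.card : ℝ)) := by
      intro A
      have h := Finset.sum_add_sum_compl A (fun k => v k ^ 2)
      have h' : ∑ k ∈ Aᶜ, v k ^ 2 = T - ∑ k ∈ A, v k ^ 2 := by
        rw [hT]; linarith
      rw [h']
      ring
    rw [Finset.sum_congr rfl (fun A _ => hAc A), Finset.sum_sub_distrib, ← Finset.sum_mul,
      hmass, one_mul]
  -- final numeric comparison
  have hx0 : (0:ℝ) ≤ (1 - c) ^ m := pow_nonneg (by linarith) m
  have hx1 : (1 - c) ^ m ≤ 1 := pow_le_one₀ (by linarith) (by linarith)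
  have hcoef : c ^ 4 * (1 - (1 - c) ^ m) ^ 2 / 8 ≤ c ^ 2 := by
    have hc2 : c ^ 2 ≤ 1 := by nlinarith
    have h1 : (1 - (1 - c) ^ m) ^ 2 ≤ 1 := by nlinarith
    have h2 : c ^ 4 ≤ c ^ 2 := by nlinarith [sq_nonneg c, sq_nonneg (c * c)]
    have h4 : (0:ℝ) ≤ c ^ 4 := by positivity
    have h3 : c ^ 4 * (1 - (1 - c) ^ m) ^ 2 ≤ c ^ 2 :=
      le_trans (by nlinarith [mul_le_mul_of_nonneg_left h1 h4]) h2
    have h5 : (0:ℝ) ≤ c ^ 2 := sq_nonneg c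
    linarith
  rw [key2]
  have : c ^ 4 * (1 - (1 - c) ^ m) ^ 2 / 8 * T ≤ c ^ 2 * T :=
    mul_le_mul_of_nonneg_right hcoef hTnn
  nlinarith [hdiss]
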